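/- Let (Ω, 𝔽, P) be a probability space and ε : Ω → ℝ^m a random vector with E[εᵢ] = 0 for all i and E[εᵢ εⱼ] = σ² if i = j and 0 otherwise, for some σ ≥ 0. Let H be a fixed real m × p matrix, λ > 0, θ* ∈ ℝ^p, y = Hθ* + ε, and θ̂ = (HᵀH + λI)⁻¹ Hᵀ y. Then E[‖θ̂ − θ*‖₂²] ≤ σ² tr((HᵀH + λI)⁻¹) + λ² ‖θ*‖₂² ‖(HᵀH + λI)⁻¹‖₂². -/

import Mathlib

open Matrix MeasureTheory
open scoped Matrix.Norms.L2Operator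

/-- Mean-squared-error bound for the ridge estimator (Proposition A.3): in the linear-noise
model `y = H θ* + ε` with mean-zero, uncorrelated noise of variance `σ²`, the closed-form ridge
estimator `θ̂ = (Hᵀ H + lam • 1)⁻¹ Hᵀ y` satisfies
`E[‖θ̂ - θ*‖₂²] ≤ σ² tr((Hᵀ H + lam • 1)⁻¹) + lam² ‖θ*‖₂² ‖(Hᵀ H + lam • 1)⁻¹‖₂²`,
where the matrix norm is the operator norm induced by the Euclidean norm. -/
theorem stmt_8 {Ω : Type*} [MeasurableSpace Ω] (μ : Measure Ω) [IsProbabilityMeasure μ]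
    {m p : ℕ} (ε : Ω → Fin m → ℝ) (σ : ℝ) (hσ : 0 ≤ σ)
    (hint : ∀ i : Fin m, Integrable (fun ω => ε ω i) μ)
    (hmean : ∀ i : Fin m, ∫ ω, ε ω i ∂μ = 0)
    (hint2 : ∀ i j : Fin m, Integrable (fun ω => ε ω i * ε ω j) μ)
    (hcov : ∀ i j : Fin m, ∫ ω, ε ω i * ε ω j ∂μ = if i = j then σ ^ 2 else 0)
    (H : Matrix (Fin m) (Fin p) ℝ) (lam : ℝ) (hlam : 0 < lam) (θs : Fin p → ℝ)
    (y : Ω → Fin m → ℝ) (hy : ∀ ω, y ω = H *ᵥ θs + ε ω)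
    (θhat : Ω → Fin p → ℝ)
    (hθhat : ∀ ω, θhat ω = (Hᵀ * H + lam • (1 : Matrix (Fin p) (Fin p) ℝ))⁻¹ *ᵥ (Hᵀ *ᵥ y ω)) :
    (∫ ω, ∑ i : Fin p, (θhat ω i - θs i) ^ 2 ∂μ) ≤
      σ ^ 2 * ((Hᵀ * H + lam • (1 : Matrix (Fin p) (Fin p) ℝ))⁻¹).trace +
        lam ^ 2 * (∑ i : Fin p, θs i ^ 2) *
          ‖(Hᵀ * H + lam • (1 : Matrix (Fin p) (Fin p) ℝ))⁻¹‖ ^ 2 := by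
  set A : Matrix (Fin p) (Fin p) ℝ := Hᵀ * H + lam • 1 with hAdef
  -- positive definiteness
  have hHH : (Hᵀ * H).PosSemidef := by
    simpa [Matrix.conjTranspose_eq_transpose_of_trivial] using
      Matrix.posSemidef_conjTranspose_mul_self H
  have hlamI : ((lam • 1 : Matrix (Fin p) (Fin p) ℝ)).PosDef := by
    rw [Matrix.smul_one_eq_diagonal]
    exact (Matrix.posDef_diagonal_iff).2 fun i => hlam
  have hA : A.PosDef := Matrix.PosDef.posSemidef_add hHH hlamI
  have hdet : IsUnit A.det := hA.det_pos.ne'.isUnit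
  have hMA : A⁻¹ * A = 1 := Matrix.nonsing_inv_mul A hdet
  have hAT : Aᵀ = A := by
    have := hA.isHermitian
    rwa [Matrix.IsHermitian, Matrix.conjTranspose_eq_transpose_of_trivial] at this
  have hMT : (A⁻¹)ᵀ = A⁻¹ := by
    rw [Matrix.transpose_nonsing_inv, hAT]
  -- notation
  set M : Matrix (Fin p) (Fin p) ℝ := A⁻¹ with hMdef
  set B : Matrix (Fin p) (Fin m) ℝ := M * Hᵀ with hBdef
  set c : Fin p → ℝ := lam • (M *ᵥ θs) with hcdef
  -- decomposition of the error
  have hv : ∀ ω, (fun i => θhat ω i - θs i) = B *ᵥ ε ω - c := by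
    intro ω
    have h1 : θhat ω = (M * (Hᵀ * H)) *ᵥ θs + B *ᵥ ε ω := by
      rw [hθhat, hy, Matrix.mulVec_add, Matrix.mulVec_add, Matrix.mulVec_mulVec,
        Matrix.mulVec_mulVec, Matrix.mulVec_mulVec, Matrix.mul_assoc]
    have h2 : (M * (Hᵀ * H)) *ᵥ θs = θs - c := by
      have hsub : Hᵀ * H = A - lam • 1 := by rw [hAdef, add_sub_cancel_right]
      rw [hsub, Matrix.mul_sub, hMA, Matrix.mul_smul,
        Matrix.mul_one, Matrix.sub_mulVec, Matrix.one_mulVec, Matrix.smul_mulVec,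
        hcdef]
    funext i
    rw [h1, h2]
    simp [Pi.add_apply, Pi.sub_apply]
    ring
  -- the integrand, expanded
  have hexp : ∀ ω, (∑ i : Fin p, (θhat ω i - θs i) ^ 2) =
      ∑ i : Fin p, ((∑ k, ∑ l, B i k * B i l * (ε ω k * ε ω l))
        - 2 * c i * (∑ k, B i k * ε ω k) + c i ^ 2) := by
    intro ω
    refine Finset.sum_congr rfl fun i _ => ?_
    have hvi : θhat ω i - θs i = (∑ k, B i k * ε ω k) - c i := by
      have := congrFun (hv ω) i
      simpa [Matrix.mulVec, dotProduct] using this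
    have key : ∀ a b : ℝ, (a - b) ^ 2 = a * a - 2 * b * a + b ^ 2 := fun a b => by ring
    rw [hvi, key, Finset.sum_mul_sum]
    congr 1
    congr 1
    exact Finset.sum_congr rfl fun k _ => Finset.sum_congr rfl fun l _ => by ring
  -- integrability
  have hI1 : ∀ i : Fin p, Integrable
      (fun ω => ∑ k, ∑ l, B i k * B i l * (ε ω k * ε ω l)) μ := fun i =>
    integrable_finset_sum _ fun k _ => integrable_finset_sum _ fun l _ =>
      (hint2 k l).const_mul _
  have hI2 : ∀ i : Fin p, Integrable (fun ω => ∑ k, B i k * ε ω k) μ := fun i =>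
    integrable_finset_sum _ fun k _ => (hint k).const_mul _
  have hIf : ∀ i : Fin p, Integrable
      (fun ω => (∑ k, ∑ l, B i k * B i l * (ε ω k * ε ω l))
        - 2 * c i * (∑ k, B i k * ε ω k) + c i ^ 2) μ := fun i =>
    (((hI1 i).sub ((hI2 i).const_mul _)).add (integrable_const _))
  -- compute the integral
  have hval : (∫ ω, ∑ i : Fin p, (θhat ω i - θs i) ^ 2 ∂μ) =
      σ ^ 2 * (∑ i : Fin p, ∑ k, B i k ^ 2) + ∑ i : Fin p, c i ^ 2 := by
    rw [show (fun ω => ∑ i : Fin p, (θhat ω i - θs i) ^ 2) = fun ω =>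
      ∑ i : Fin p, ((∑ k, ∑ l, B i k * B i l * (ε ω k * ε ω l))
        - 2 * c i * (∑ k, B i k * ε ω k) + c i ^ 2) from funext hexp]
    rw [integral_finset_sum _ fun i _ => hIf i]
    have hterm : ∀ i : Fin p, (∫ ω, ((∑ k, ∑ l, B i k * B i l * (ε ω k * ε ω l))
        - 2 * c i * (∑ k, B i k * ε ω k) + c i ^ 2) ∂μ)
        = σ ^ 2 * (∑ k, B i k ^ 2) + c i ^ 2 := by
      intro i
      have hIa : Integrable (fun ω => (∑ k, ∑ l, B i k * B i l * (ε ω k * ε ω l))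
          - 2 * c i * (∑ k, B i k * ε ω k)) μ := (hI1 i).sub ((hI2 i).const_mul _)
      have hIb : Integrable (fun ω => 2 * c i * (∑ k, B i k * ε ω k)) μ :=
        (hI2 i).const_mul _
      have eX : (∫ ω, ∑ k, ∑ l, B i k * B i l * (ε ω k * ε ω l) ∂μ)
          = σ ^ 2 * ∑ k, B i k ^ 2 := by
        rw [integral_finset_sum _ fun k _ => integrable_finset_sum _ fun l _ =>
          (hint2 k l).const_mul _]
        have e1 : ∀ k : Fin m, (∫ ω, ∑ l, B i k * B i l * (ε ω k * ε ω l) ∂μ)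
            = σ ^ 2 * B i k ^ 2 := by
          intro k
          rw [integral_finset_sum _ fun l _ => (hint2 k l).const_mul _]
          simp only [integral_const_mul, hcov, mul_ite, mul_zero]
          rw [Finset.sum_ite_eq Finset.univ k (fun l => B i k * B i l * σ ^ 2)]
          simp [sq]
          ring
        rw [Finset.sum_congr rfl fun k _ => e1 k, ← Finset.mul_sum]
      have eS : (∫ ω, ∑ k, B i k * ε ω k ∂μ) = 0 := by
        rw [integral_finset_sum _ fun k _ => (hint k).const_mul _]
        simp only [integral_const_mul, hmean, mul_zero, Finset.sum_const_zero]
      rw [integral_add hIa (integrable_const _), integral_sub (hI1 i) hIb,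
        integral_const_mul, eX, eS, integral_const]
      simp
    rw [Finset.sum_congr rfl fun i _ => hterm i, Finset.sum_add_distrib, ← Finset.mul_sum]
  rw [hval]
  -- bound the variance term
  have hbd1 : (∑ i : Fin p, ∑ k, B i k ^ 2) ≤ M.trace := by
    have htr : (∑ i : Fin p, ∑ k, B i k ^ 2) = (B * Bᵀ).trace := by
      simp [Matrix.trace, Matrix.diag, Matrix.mul_apply, sq]
    have hBB : B * Bᵀ = M - lam • (M * M) := by
      rw [hBdef, Matrix.transpose_mul, hMT, Matrix.transpose_transpose]
      have heq : (M * Hᵀ) * (H * M) = M * (Hᵀ * H) * M := by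
        simp only [Matrix.mul_assoc]
      rw [heq]
      have hsub : Hᵀ * H = A - lam • 1 := by rw [hAdef, add_sub_cancel_right]
      rw [hsub, Matrix.mul_sub, hMA, Matrix.mul_smul, Matrix.mul_one,
        Matrix.sub_mul, Matrix.one_mul, Matrix.smul_mul]
    have htr2 : 0 ≤ (M * M).trace := by
      have : (M * M).trace = ∑ i : Fin p, ∑ j : Fin p, M i j ^ 2 := by
        simp only [Matrix.trace, Matrix.diag, Matrix.mul_apply, sq]
        refine Finset.sum_congr rfl fun i _ => Finset.sum_congr rfl fun j _ => ?_
        rw [(Matrix.transpose_apply M i j).symm.trans (congrFun (congrFun hMT i) j)]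
      rw [this]
      positivity
    rw [htr, hBB, Matrix.trace_sub, Matrix.trace_smul]
    have : 0 ≤ lam * (M * M).trace := mul_nonneg hlam.le htr2
    simpa [smul_eq_mul] using sub_le_self M.trace this
  -- bound the bias term
  have hbd2 : (∑ i : Fin p, c i ^ 2) ≤ lam ^ 2 * (∑ i : Fin p, θs i ^ 2) * ‖M‖ ^ 2 := by
    have hsq : ∀ v : Fin p → ℝ, (∑ i, v i ^ 2)
        = ‖(EuclideanSpace.equiv (Fin p) ℝ).symm v‖ ^ 2 := by
      intro v
      rw [EuclideanSpace.norm_eq, Real.sq_sqrt (by positivity)]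
      simp [sq_abs]
    have hop := Matrix.l2_opNorm_mulVec M ((EuclideanSpace.equiv (Fin p) ℝ).symm θs)
    have hcs : (∑ i, c i ^ 2) = lam ^ 2 * ∑ i, (M *ᵥ θs) i ^ 2 := by
      rw [Finset.mul_sum]
      exact Finset.sum_congr rfl fun i _ => by simp [hcdef, mul_pow]
    rw [hcs, hsq (M *ᵥ θs)]
    have h1 : ‖(EuclideanSpace.equiv (Fin p) ℝ).symm (M *ᵥ θs)‖ ^ 2
        ≤ (‖M‖ * ‖(EuclideanSpace.equiv (Fin p) ℝ).symm θs‖) ^ 2 := by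
      refine pow_le_pow_left₀ (norm_nonneg _) ?_ 2
      exact hop
    have h2 : ‖(EuclideanSpace.equiv (Fin p) ℝ).symm θs‖ ^ 2 = ∑ i, θs i ^ 2 :=
      (hsq θs).symm
    calc lam ^ 2 * ‖(EuclideanSpace.equiv (Fin p) ℝ).symm (M *ᵥ θs)‖ ^ 2
        ≤ lam ^ 2 * (‖M‖ * ‖(EuclideanSpace.equiv (Fin p) ℝ).symm θs‖) ^ 2 := by
          exact mul_le_mul_of_nonneg_left h1 (by positivity)
      _ = lam ^ 2 * (∑ i, θs i ^ 2) * ‖M‖ ^ 2 := by rw [mul_pow, h2]; ring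
  have hσ2 : (0:ℝ) ≤ σ ^ 2 := sq_nonneg σ
  calc σ ^ 2 * (∑ i : Fin p, ∑ k, B i k ^ 2) + ∑ i : Fin p, c i ^ 2
      ≤ σ ^ 2 * M.trace + lam ^ 2 * (∑ i : Fin p, θs i ^ 2) * ‖M‖ ^ 2 :=
        add_le_add (mul_le_mul_of_nonneg_left hbd1 hσ2) hbd2
    _ = _ := rfl
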